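/- arXiv:1509.09092 — 5 statements merged into one kernel-verified Lean document; each statement's English description precedes it below -/
import Mathlib

section
/- The abstraction of the read statement v := a[i] is sound: if (x, i, a) ∈ γ(I♯₁) and v = a i, then (x, i, v, a) ∈ γ(I♯₂), where I♯₂ is the set of tuples generated from I♯₁ by the two Horn rules for the read statement. -/
theorem read_statement_sound {χ ι β : Type*}
    (I₁ : Set ((χ × ι) × (ι × β))) (I₂ : Set ((χ × ι × β) × (ι × β)))
    (hI₂ : I₂ = {p | (∃ x : χ, ∃ i k : ι, ∃ aᵢ aₖ : β,
        k ≠ i ∧ ((x, i), (k, aₖ)) ∈ I₁ ∧ ((x, i), (i, aᵢ)) ∈ I₁ ∧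
        p = ((x, i, aᵢ), (k, aₖ))) ∨
      (∃ x : χ, ∃ i : ι, ∃ aᵢ : β,
        ((x, i), (i, aᵢ)) ∈ I₁ ∧ p = ((x, i, aᵢ), (i, aᵢ)))}) :
    ∀ (x : χ) (i : ι) (a : ι → β) (v : β),
      (∀ k : ι, ((x, i), (k, a k)) ∈ I₁) → v = a i →
      ∀ k : ι, ((x, i, v), (k, a k)) ∈ I₂ := by
  intro x i a v h hv k
  subst hv hI₂
  by_cases hk : k = i
  · subst hk
    exact Or.inr ⟨x, k, a k, h k, rfl⟩
  · exact Or.inl ⟨x, i, k, a i, a k, hk, h k, h i, rfl⟩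
end

section
/- The abstraction of the write statement a[i] := v is sound: if (x, i, v, a) ∈ γ(I♯₁), then (x, i, v, a') ∈ γ(I♯₂), where a' is a updated at index i with value v (a' i = v and a' k = a k for k ≠ i), and I♯₂ is generated from I♯₁ by the two write Horn rules. -/
theorem write_statement_sound {χ ι β : Type*} [DecidableEq ι]
    (I₁ I₂ : Set ((χ × ι × β) × (ι × β)))
    (hI₂ : I₂ = {p | (∃ x : χ, ∃ i k : ι, ∃ v aₖ : β,
        i ≠ k ∧ ((x, i, v), (k, aₖ)) ∈ I₁ ∧ p = ((x, i, v), (k, aₖ))) ∨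
      (∃ x : χ, ∃ i : ι, ∃ v aₖ : β,
        ((x, i, v), (i, aₖ)) ∈ I₁ ∧ p = ((x, i, v), (i, v)))}) :
    ∀ (x : χ) (i : ι) (v : β) (a : ι → β),
      (∀ k : ι, ((x, i, v), (k, a k)) ∈ I₁) →
      ∀ k : ι, ((x, i, v), (k, Function.update a i v k)) ∈ I₂ := by
  intro x i v a h k
  subst hI₂
  by_cases hk : k = i
  · subst hk
    right
    exact ⟨x, k, v, a k, h k, by simp [Function.update_self]⟩
  · left
    exact ⟨x, i, k, v, a k, fun h' => hk h'.symm, h k, by simp [Function.update_of_ne hk]⟩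
end

section
/- The two-index abstraction of the read statement v := a[i] is sound: if (x, i, a) ∈ γ₂≤(I♯₁), then (x, i, a i, a) ∈ γ₂≤(I♯₂), where I♯₂ is generated from I♯₁ by the four Horn rules of Definition 'Read statement, two indices k₁ ≤ k₂'. -/
theorem read_two_indices_sound {χ β : Type*} {ι : Type*} [LinearOrder ι]
    (I₁ : Set ((χ × ι) × ι × β × ι × β))
    (I₂ : Set ((χ × ι × β) × ι × β × ι × β))
    (hI₂ : I₂ = {p |
      (∃ x : χ, ∃ i k₁ k₂ : ι, ∃ v a₁ a₂ : β,
        k₁ ≠ i ∧ i < k₂ ∧ ((x, i), k₁, a₁, k₂, a₂) ∈ I₁ ∧ ((x, i), i, v, k₂, a₂) ∈ I₁ ∧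
        p = ((x, i, v), k₁, a₁, k₂, a₂)) ∨
      (∃ x : χ, ∃ i k₁ k₂ : ι, ∃ v a₁ a₂ : β,
        k₂ ≠ i ∧ k₁ < i ∧ ((x, i), k₁, a₁, k₂, a₂) ∈ I₁ ∧ ((x, i), k₁, a₁, i, v) ∈ I₁ ∧
        p = ((x, i, v), k₁, a₁, k₂, a₂)) ∨
      (∃ x : χ, ∃ i k₂ : ι, ∃ v a₂ : β,
        i < k₂ ∧ ((x, i), i, v, k₂, a₂) ∈ I₁ ∧
        p = ((x, i, v), i, v, k₂, a₂)) ∨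
      (∃ x : χ, ∃ i k₁ : ι, ∃ v a₁ : β,
        k₁ ≤ i ∧ ((x, i), k₁, a₁, i, v) ∈ I₁ ∧
        p = ((x, i, v), k₁, a₁, i, v))}) :
    ∀ (x : χ) (i : ι) (a : ι → β),
      (∀ k₁ k₂ : ι, k₁ ≤ k₂ → ((x, i), k₁, a k₁, k₂, a k₂) ∈ I₁) →
      ∀ k₁ k₂ : ι, k₁ ≤ k₂ → ((x, i, a i), k₁, a k₁, k₂, a k₂) ∈ I₂ := by
  intro x i a hg k₁ k₂ hk
  subst hI₂
  by_cases h2 : k₂ = i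
  · subst h2
    exact Or.inr (Or.inr (Or.inr ⟨x, k₂, k₁, a k₂, a k₁, hk, hg k₁ k₂ hk, rfl⟩))
  · by_cases h1 : k₁ = i
    · subst h1
      exact Or.inr (Or.inr (Or.inl ⟨x, k₁, k₂, a k₁, a k₂, lt_of_le_of_ne hk (Ne.symm h2),
        hg k₁ k₂ hk, rfl⟩))
    · rcases lt_or_gt_of_ne h2 with h | h
      · exact Or.inr (Or.inl ⟨x, i, k₁, k₂, a i, a k₁, a k₂, h2, lt_of_le_of_lt hk h,
          hg k₁ k₂ hk, hg k₁ i (le_of_lt (lt_of_le_of_lt hk h)), rfl⟩)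
      · exact Or.inl ⟨x, i, k₁, k₂, a i, a k₁, a k₂, h1, h,
          hg k₁ k₂ hk, hg i k₂ (le_of_lt h), rfl⟩
end

section
/- The two-index abstraction of the write statement a[i] := v is sound: if (x, i, v, a) ∈ γ₂≤(I♯₁) and a' = store(a, i, v), then (x, i, v, a') ∈ γ₂≤(I♯₂), where I♯₂ is generated from I♯₁ by the four Horn rules of Definition 'Write statement, two indices k₁ ≤ k₂'. -/
theorem write_two_indices_sound {χ β : Type*} {ι : Type*} [LinearOrder ι]
    (I₁ I₂ : Set ((χ × ι × β) × ι × β × ι × β))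
    (hI₂ : I₂ = {p |
      (∃ x : χ, ∃ i k₁ k₂ : ι, ∃ v a₁ a₂ : β,
        i ≠ k₁ ∧ i ≠ k₂ ∧ ((x, i, v), k₁, a₁, k₂, a₂) ∈ I₁ ∧
        p = ((x, i, v), k₁, a₁, k₂, a₂)) ∨
      (∃ x : χ, ∃ i k₂ : ι, ∃ v a₁ a₂ : β,
        i ≠ k₂ ∧ ((x, i, v), i, a₁, k₂, a₂) ∈ I₁ ∧
        p = ((x, i, v), i, v, k₂, a₂)) ∨
      (∃ x : χ, ∃ i k₁ : ι, ∃ v a₁ a₂ : β,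
        i ≠ k₁ ∧ ((x, i, v), k₁, a₁, i, a₂) ∈ I₁ ∧
        p = ((x, i, v), k₁, a₁, i, v)) ∨
      (∃ x : χ, ∃ i : ι, ∃ v aₖ : β,
        ((x, i, v), i, aₖ, i, aₖ) ∈ I₁ ∧
        p = ((x, i, v), i, v, i, v))}) :
    ∀ (x : χ) (i : ι) (v : β) (a : ι → β),
      (∀ k₁ k₂ : ι, k₁ ≤ k₂ → ((x, i, v), k₁, a k₁, k₂, a k₂) ∈ I₁) →
      ∀ k₁ k₂ : ι, k₁ ≤ k₂ →
        ((x, i, v), k₁, Function.update a i v k₁, k₂, Function.update a i v k₂) ∈ I₂ := by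
  intro x i v a h k₁ k₂ hk
  subst hI₂
  by_cases h1 : i = k₁ <;> by_cases h2 : i = k₂
  · subst h1; subst h2
    right; right; right
    exact ⟨x, i, v, a i, h i i le_rfl, by simp [Function.update_self]⟩
  · subst h1
    right; left
    exact ⟨x, i, k₂, v, a i, a k₂, h2, h i k₂ hk, by
      simp [Function.update_self, Function.update_of_ne (Ne.symm h2)]⟩
  · subst h2
    right; right; left
    exact ⟨x, i, k₁, v, a k₁, a i, h1, h k₁ i hk, by
      simp [Function.update_self, Function.update_of_ne (Ne.symm h1)]⟩
  · left
    exact ⟨x, i, k₁, k₂, v, a k₁, a k₂, h1, h2, h k₁ k₂ hk, by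
      simp [Function.update_of_ne (Ne.symm h1), Function.update_of_ne (Ne.symm h2)]⟩
end

section
/- The multiset-tracking abstraction of the write statement is sound: if (x, i, v, a) ∈ γ#(I♯₁) and a' = store(a, i, v), then (x, i, v, a') ∈ γ#(I♯₂), where I♯₂ is obtained from I♯₁ by composing the decrement rules (through intermediate predicate I♯ₐ), the increment rules (through intermediate predicate I♯_b), and the array-update rules of Definition 'Write statement' with counts. -/
theorem write_with_counts_sound {χ β : Type*} {ι : Type*}
    [Fintype ι] [DecidableEq ι] [DecidableEq β]
    (I₁ Iₐ I_b I₂ : Set ((χ × β × ι) × (ι × β) × (β × ℕ)))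
    (hIₐ : Iₐ = {p |
      (∃ x : χ, ∃ i k : ι, ∃ v aᵢ aₖ z : β, ∃ c : ℕ,
        aᵢ ≠ z ∧ ((x, v, i), (k, aₖ), (z, c)) ∈ I₁ ∧ ((x, v, i), (i, aᵢ), (z, c)) ∈ I₁ ∧
        p = ((x, v, i), (k, aₖ), (z, c))) ∨
      (∃ x : χ, ∃ i k : ι, ∃ v aᵢ aₖ : β, ∃ c : ℕ,
        ((x, v, i), (k, aₖ), (aᵢ, c)) ∈ I₁ ∧ ((x, v, i), (i, aᵢ), (aᵢ, c)) ∈ I₁ ∧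
        p = ((x, v, i), (k, aₖ), (aᵢ, c - 1)))})
    (hI_b : I_b = {p |
      (∃ x : χ, ∃ i k : ι, ∃ v aᵢ aₖ z : β, ∃ c : ℕ,
        v ≠ z ∧ ((x, v, i), (k, aₖ), (z, c)) ∈ Iₐ ∧ ((x, v, i), (i, aᵢ), (z, c)) ∈ Iₐ ∧
        p = ((x, v, i), (k, aₖ), (z, c))) ∨
      (∃ x : χ, ∃ i k : ι, ∃ v aᵢ aₖ : β, ∃ c : ℕ,
        ((x, v, i), (k, aₖ), (v, c)) ∈ Iₐ ∧ ((x, v, i), (i, aᵢ), (v, c)) ∈ Iₐ ∧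
        p = ((x, v, i), (k, aₖ), (v, c + 1)))})
    (hI₂ : I₂ = {p |
      (∃ x : χ, ∃ i k : ι, ∃ v aₖ z : β, ∃ c : ℕ,
        i ≠ k ∧ ((x, v, i), (k, aₖ), (z, c)) ∈ I_b ∧
        p = ((x, v, i), (k, aₖ), (z, c))) ∨
      (∃ x : χ, ∃ i : ι, ∃ v aₖ z : β, ∃ c : ℕ,
        ((x, v, i), (i, aₖ), (z, c)) ∈ I_b ∧
        p = ((x, v, i), (i, v), (z, c)))}) :
    ∀ (x : χ) (i : ι) (v : β) (a : ι → β),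
      (∀ k : ι, ∀ z : β,
        ((x, v, i), (k, a k), (z, (Finset.univ.filter (fun j : ι => a j = z)).card)) ∈ I₁) →
      ∀ k : ι, ∀ z : β,
        ((x, v, i), (k, Function.update a i v k),
          (z, (Finset.univ.filter (fun j : ι => Function.update a i v j = z)).card)) ∈ I₂ := by

  intro x i v a h
  -- E z : count among indices ≠ i
  set E : β → ℕ := fun z => ((Finset.univ.erase i).filter (fun j : ι => a j = z)).card with hE
  have split : ∀ (f : ι → β) (z : β), (Finset.univ.filter (fun j : ι => f j = z)).card =
      (if f i = z then 1 else 0) + ((Finset.univ.erase i).filter (fun j : ι => f j = z)).card := by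
    intro f z
    conv_lhs => rw [← Finset.insert_erase (Finset.mem_univ i)]
    rw [Finset.filter_insert]
    split
    · rw [Finset.card_insert_of_notMem (by simp [Finset.mem_filter])]
      omega
    · simp
  have hc : ∀ z : β, (Finset.univ.filter (fun j : ι => a j = z)).card =
      (if a i = z then 1 else 0) + E z := fun z => split a z
  have hupd : ∀ z : β, (Finset.univ.filter (fun j : ι => Function.update a i v j = z)).card =
      (if v = z then 1 else 0) + E z := by
    intro z
    rw [split (Function.update a i v) z]
    congr 1
    · simp
    · simp only [hE]
      congr 1
      apply Finset.filter_congr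
      intro j hj
      simp only [Finset.mem_erase] at hj
      simp [Function.update_of_ne hj.1]
  -- step 1 : Iₐ
  have ha : ∀ k : ι, ∀ z : β, ((x, v, i), (k, a k), (z, E z)) ∈ Iₐ := by
    intro k z
    rw [hIₐ]
    by_cases hz : z = a i
    · right
      refine ⟨x, i, k, v, a i, a k, (Finset.univ.filter (fun j : ι => a j = z)).card,
        ?_, ?_, ?_⟩
      · subst hz; exact h k (a i)
      · subst hz; exact h i (a i)
      · subst hz
        have := hc (a i)
        simp only [if_pos rfl] at this
        simp [this]
    · left
      refine ⟨x, i, k, v, a i, a k, z, E z, fun hh => hz hh.symm, ?_, ?_, rfl⟩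
      · have := hc z
        rw [if_neg (fun hh => hz hh.symm)] at this
        simpa [this] using h k z
      · have := hc z
        rw [if_neg (fun hh => hz hh.symm)] at this
        simpa [this] using h i z
  -- step 2 : I_b
  have hb : ∀ k : ι, ∀ z : β, ((x, v, i), (k, a k), (z, (if v = z then 1 else 0) + E z)) ∈ I_b := by
    intro k z
    rw [hI_b]
    by_cases hz : v = z
    · right
      subst hz
      exact ⟨x, i, k, v, a i, a k, E v, ha k v, ha i v, by simp [Nat.add_comm]⟩
    · left
      exact ⟨x, i, k, v, a i, a k, z, E z, hz, ha k z, ha i z, by simp [hz]⟩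
  -- step 3 : I₂
  intro k z
  rw [hupd z, hI₂]
  by_cases hk : k = i
  · right
    subst hk
    exact ⟨x, k, v, a k, z, (if v = z then 1 else 0) + E z, hb k z, by simp⟩
  · left
    refine ⟨x, i, k, v, a k, z, (if v = z then 1 else 0) + E z, fun hh => hk hh.symm,
      hb k z, ?_⟩
    rw [Function.update_of_ne hk]
end
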